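/- Let U : CommRingCat ⥤ Type be the forgetful functor on the category of commutative rings and for each natural number n let U^n : CommRingCat ⥤ Type be the functor sending a commutative ring R to the type Fin n → U(R) and a ring homomorphism f to postcomposition with U(f). The map sending a polynomial p : MvPolynomial (Fin n) ℤ to the natural transformation U^n ⟶ U whose component at R sends x : Fin n → R to the evaluation of p at x (via the unique ℤ-algebra structure on R, i.e. MvPolynomial.aeval x p) is a bijection between MvPolynomial (Fin n) ℤ and the natural transformations U^n ⟶ U. -/

import Mathlib

open CategoryTheory

/-- The `n`-th power of the forgetful functor on the category of commutative rings,
sending a ring `R` to `Fin n → R` and a homomorphism to postcomposition with it. -/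
def forgetPow (n : ℕ) : CommRingCat.{u} ⥤ Type u where
  obj R := Fin n → R
  map f := TypeCat.ofHom fun x => fun i => f (x i)

lemma aux_down_aeval (n : ℕ) (p : MvPolynomial (Fin n) ℤ) :
    (MvPolynomial.aeval (R := ℤ)
      (fun i => ULift.up.{u} (MvPolynomial.X (R := ℤ) i)) p).down = p := by
  have h := MvPolynomial.comp_aeval_apply
    (f := fun i => ULift.up.{u} (MvPolynomial.X (R := ℤ) i))
    ((ULift.ringEquiv (R := MvPolynomial (Fin n) ℤ)).toRingHom.toIntAlgHom) p
  exact h.trans (by simp only [ULift.ringEquiv, RingEquiv.coe_mk, Equiv.coe_fn_mk,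
    RingHom.toIntAlgHom_coe, RingEquiv.toRingHom_eq_coe, RingEquiv.coe_toRingHom,
    MvPolynomial.aeval_X_left_apply]
                    exact AlgHom.congr_fun (MvPolynomial.algHom_ext (fun i => MvPolynomial.aeval_X _ i) : _ = AlgHom.id ℤ _) p)

/-- Reconstruction of the `n`-ary operations `T_U(n, 1) = Nat(Uⁿ, U)` of the Lawvere theory of
commutative rings from the forgetful functor `U` on the category of commutative rings:
natural transformations `Uⁿ ⟶ U` correspond exactly to integer polynomials in `n` variables,
via evaluation. -/
theorem commRingOperations_bijective (n : ℕ) :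
    Function.Bijective (fun p : MvPolynomial (Fin n) ℤ =>
      ({ app := fun R => TypeCat.ofHom fun x => MvPolynomial.aeval x p
         naturality := by
           intro R S g
           ext x
           exact (MvPolynomial.comp_aeval_apply (f := x) g.hom.toIntAlgHom p).symm } :
        forgetPow.{u} n ⟶ forget CommRingCat.{u})) := by
  set R₀ : CommRingCat.{u} := CommRingCat.of (ULift.{u} (MvPolynomial (Fin n) ℤ))
  set x₀ : Fin n → R₀ := fun i => ULift.up (MvPolynomial.X i)
  constructor
  · intro p q h
    have h' := types_congr_hom (congrArg (fun τ : forgetPow.{u} n ⟶ forget CommRingCat.{u} =>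
      τ.app R₀) h) x₀
    have hp := aux_down_aeval.{u} n p
    have hq := aux_down_aeval.{u} n q
    rw [← hp, ← hq]
    exact congrArg ULift.down h'
  · intro τ
    refine ⟨(τ.app R₀ (show (forgetPow.{u} n).obj R₀ from x₀)).down, ?_⟩
    apply NatTrans.ext
    funext R
    ext x
    let g : R₀ ⟶ R := CommRingCat.ofHom
      ((MvPolynomial.aeval (R := ℤ) x).toRingHom.comp
        (ULift.ringEquiv (R := MvPolynomial (Fin n) ℤ)).toRingHom)
    have nat : τ.app R ((forgetPow.{u} n).map g x₀) = g (τ.app R₀ x₀) :=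
      types_congr_hom (τ.naturality g) x₀
    have hx : (forgetPow.{u} n).map g x₀ = x := by
      funext i
      change g (x₀ i) = x i
      exact MvPolynomial.aeval_X x i
    rw [hx] at nat
    change MvPolynomial.aeval x (τ.app R₀ x₀).down = τ.app R x
    exact nat.symm
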